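/- Let L be a hereditarily just-infinite Z_p-Lie lattice and let φ: M → L be a Lie algebra homomorphism from a finite-index subalgebra M of L. If φ is not injective, then there exists a nonzero ideal I of L with I ⊆ M and φ(I) ⊆ I; equivalently, if φ is simple (no nonzero φ-invariant ideal of L exists) then φ is injective. -/

import Mathlib

/-- If `L` is a hereditarily just-infinite `ℤ_[p]`-Lie lattice and
`φ : M → L` is a non-injective virtual endomorphism (with `M` of finite index in `L`),
then there is a nonzero ideal `I` of `L` with `I ⊆ M` and `φ(I) ⊆ I`; equivalently,
a simple virtual endomorphism is injective. -/
theorem stmt1 (p : ℕ) [Fact p.Prime]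
    (L : Type*) [LieRing L] [LieAlgebra ℤ_[p] L] [Module.Free ℤ_[p] L] [Module.Finite ℤ_[p] L]
    (hInf : Infinite L)
    -- hereditarily just infinite: every finite-index subalgebra is just infinite
    (hhji : ∀ N : LieSubalgebra ℤ_[p] L, Finite (L ⧸ (N : Submodule ℤ_[p] L)) →
      ∀ J : LieIdeal ℤ_[p] N, J ≠ ⊥ → Finite (N ⧸ (J : Submodule ℤ_[p] N)))
    (M : LieSubalgebra ℤ_[p] L)
    (hM : Finite (L ⧸ (M : Submodule ℤ_[p] L)))
    (φ : M →ₗ⁅ℤ_[p]⁆ L)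
    (hφ : ¬ Function.Injective φ) :
    ∃ I : LieIdeal ℤ_[p] L, I ≠ ⊥ ∧
      ∃ hIM : ∀ y ∈ I, y ∈ M, ∀ y (hy : y ∈ I), φ ⟨y, hIM y hy⟩ ∈ I := by
  -- ker φ is a nonzero ideal of M
  have hker : φ.ker ≠ ⊥ := fun h => hφ (LieHom.ker_eq_bot φ |>.mp h)
  have hfin : Finite ((M : Type _) ⧸ (φ.ker : Submodule ℤ_[p] M)) := hhji M hM φ.ker hker
  -- φ is zero: M / ker φ is finite, but L is torsion free
  have hφ0 : ∀ x : M, φ x = 0 := by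
    intro x
    set K := (φ.ker : Submodule ℤ_[p] M) with hK
    set e := AddMonoid.exponent ((M : Type _) ⧸ K) with he
    have hepos : e ≠ 0 := AddMonoid.exponent_ne_zero_of_finite
    have hx : e • x ∈ K := by
      rw [← Submodule.Quotient.mk_eq_zero]
      have : Submodule.Quotient.mk (p := K) (e • x)
          = e • Submodule.Quotient.mk (p := K) x := map_nsmul K.mkQ e x
      rw [this]
      exact AddMonoid.exponent_nsmul_eq_zero _
    have hker' : φ (e • x) = 0 := LieHom.mem_ker.mp hx
    rw [← Nat.cast_smul_eq_nsmul ℤ_[p], map_smul] at hker'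
    rcases smul_eq_zero.mp hker' with h | h
    · exact absurd (Nat.cast_eq_zero.mp h) hepos
    · exact h
  -- the ideal nL where n is the exponent of the finite group L/M
  set n := AddMonoid.exponent (L ⧸ (M : Submodule ℤ_[p] L)) with hn
  have hnpos : n ≠ 0 := AddMonoid.exponent_ne_zero_of_finite
  have hncast : (n : ℤ_[p]) ≠ 0 := Nat.cast_ne_zero.mpr hnpos
  refine ⟨{ toSubmodule := LinearMap.range ((n : ℤ_[p]) • (LinearMap.id : L →ₗ[ℤ_[p]] L)),
            lie_mem := ?_ }, ?_, ?_, ?_⟩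
  · rintro a y ⟨x, rfl⟩
    exact ⟨⁅a, x⁆, by simp [lie_smul]⟩
  · intro h
    obtain ⟨x, hx⟩ := exists_ne (0 : L)
    have hmem : (n : ℤ_[p]) • x ∈ (⊥ : LieIdeal ℤ_[p] L) := h ▸ ⟨x, rfl⟩
    rw [LieSubmodule.mem_bot] at hmem
    rcases smul_eq_zero.mp hmem with h' | h'
    · exact hncast h'
    · exact hx h'
  · rintro y ⟨x, rfl⟩
    show (n : ℤ_[p]) • x ∈ M
    rw [Nat.cast_smul_eq_nsmul]
    have : (n • x : L) ∈ (M : Submodule ℤ_[p] L) := by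
      rw [← Submodule.Quotient.mk_eq_zero]
      have : Submodule.Quotient.mk (p := (M : Submodule ℤ_[p] L)) (n • x)
          = n • Submodule.Quotient.mk (p := (M : Submodule ℤ_[p] L)) x :=
        map_nsmul (M : Submodule ℤ_[p] L).mkQ n x
      rw [this]
      exact AddMonoid.exponent_nsmul_eq_zero _
    exact this
  · intro y hy
    rw [hφ0]
    exact LieSubmodule.zero_mem _
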